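/- Let U ⊆ ℂ² ⊗ ℂ³ be a 2-dimensional complex linear subspace containing at least one nonzero element that is not decomposable. Then U has at most two decomposable directions, i.e. the set of 1-dimensional subspaces of U spanned by decomposable elements has at most two members. -/

import Mathlib

open Matrix

/-- A nonzero element of `ℂ² ⊗ ℂ³`, viewed as a 2×3 complex matrix, is decomposable if it
is an outer product `h ⊗ x` with `h ≠ 0` and `x ≠ 0` (equivalently, it has rank 1). -/
def Decomposable (A : Matrix (Fin 2) (Fin 3) ℂ) : Prop :=
  ∃ (h : Fin 2 → ℂ) (x : Fin 3 → ℂ), h ≠ 0 ∧ x ≠ 0 ∧ A = vecMulVec h x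

/-- The decomposable directions of a subspace `U ⊆ ℂ² ⊗ ℂ³`: the 1-dimensional subspaces
of `U` spanned by decomposable elements. -/
def decDirections (U : Submodule ℂ (Matrix (Fin 2) (Fin 3) ℂ)) :
    Set (Submodule ℂ (Matrix (Fin 2) (Fin 3) ℂ)) :=
  {D | ∃ A : Matrix (Fin 2) (Fin 3) ℂ,
    A ∈ U ∧ A ≠ 0 ∧ Decomposable A ∧ D = Submodule.span ℂ {A}}

/-- minors vanish for decomposable matrices -/
lemma dec_minor_zero {A : Matrix (Fin 2) (Fin 3) ℂ} (hA : Decomposable A)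
    (c0 c1 : Fin 3) : A 0 c0 * A 1 c1 - A 0 c1 * A 1 c0 = 0 := by
  obtain ⟨h, x, -, -, rfl⟩ := hA
  simp [vecMulVec_apply]
  ring

/-- if all minors vanish and A ≠ 0 then A is decomposable -/
lemma dec_of_minors {A : Matrix (Fin 2) (Fin 3) ℂ} (hA : A ≠ 0)
    (h : ∀ c0 c1 : Fin 3, A 0 c0 * A 1 c1 - A 0 c1 * A 1 c0 = 0) :
    Decomposable A := by
  by_cases h0 : A 0 = 0
  · have h1 : A 1 ≠ 0 := by
      intro h1
      apply hA
      ext i j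
      fin_cases i
      · simp [congrFun h0 j]
      · simp [congrFun h1 j]
    refine ⟨![0, 1], A 1, ?_, h1, ?_⟩
    · intro hc; have := congrFun hc 1; simp at this
    · ext i j
      fin_cases i
      · simp [vecMulVec_apply, congrFun h0 j]
      · simp [vecMulVec_apply]
  · obtain ⟨k, hk⟩ : ∃ k, A 0 k ≠ 0 := by
      by_contra hc
      push_neg at hc
      exact h0 (funext hc)
    refine ⟨![1, A 1 k / A 0 k], A 0, ?_, h0, ?_⟩
    · intro hc; have := congrFun hc 0; simp at this
    · ext i j
      fin_cases i
      · simp [vecMulVec_apply]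
      · show A 1 j = A 1 k / A 0 k * A 0 j
        have := h k j
        rw [div_mul_eq_mul_div, eq_div_iff hk]
        linear_combination this

/-- Let `U ⊆ ℂ² ⊗ ℂ³` be a 2-dimensional subspace containing at least one nonzero element
that is not decomposable. Then `U` has at most two decomposable directions. -/
theorem stmt_6 (U : Submodule ℂ (Matrix (Fin 2) (Fin 3) ℂ))
    (hU : Module.finrank ℂ U = 2)
    (hA : ∃ A ∈ U, A ≠ 0 ∧ ¬ Decomposable A) :
    ∃ D₁ D₂ : Submodule ℂ (Matrix (Fin 2) (Fin 3) ℂ),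
      decDirections U ⊆ {D₁, D₂} := by
  obtain ⟨A, hAU, hA0, hAnd⟩ := hA
  -- find a nonzero minor of A
  obtain ⟨c0, c1, hm⟩ : ∃ c0 c1 : Fin 3, A 0 c0 * A 1 c1 - A 0 c1 * A 1 c0 ≠ 0 := by
    by_contra hc
    push_neg at hc
    exact hAnd (dec_of_minors hA0 hc)
  -- find B ∈ U not in span of A
  have hspanA : Submodule.span ℂ {A} ≠ U := by
    intro hEq
    have h1 : Module.finrank ℂ (Submodule.span ℂ ({A} : Set (Matrix (Fin 2) (Fin 3) ℂ))) = 1 :=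
      finrank_span_singleton hA0
    rw [hEq, hU] at h1
    norm_num at h1
  have hle : Submodule.span ℂ {A} ≤ U := by
    rw [Submodule.span_le, Set.singleton_subset_iff]; exact hAU
  obtain ⟨B, hBU, hBns⟩ : ∃ B ∈ U, B ∉ Submodule.span ℂ ({A} : Set (Matrix (Fin 2) (Fin 3) ℂ)) := by
    by_contra hc
    push_neg at hc
    exact hspanA (le_antisymm hle hc)
  -- span {A, B} = U
  have hli : LinearIndependent ℂ ![A, B] := by
    rw [LinearIndependent.pair_iff]
    intro s t hst
    rcases eq_or_ne t 0 with ht | ht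
    · subst ht
      simp only [zero_smul, add_zero] at hst
      rcases smul_eq_zero.mp hst with hs | hA'
      · exact ⟨hs, rfl⟩
      · exact absurd hA' hA0
    · exfalso
      apply hBns
      have h1 : t • B = (-s) • A := by
        rw [neg_smul]
        exact eq_neg_of_add_eq_zero_right hst
      have h2 := congrArg (fun v => (t⁻¹ : ℂ) • v) h1
      simp only [smul_smul, inv_mul_cancel₀ ht, one_smul] at h2
      rw [h2]
      exact Submodule.smul_mem _ _ (Submodule.mem_span_singleton_self A)
  have hspan2 : Submodule.span ℂ ({A, B} : Set (Matrix (Fin 2) (Fin 3) ℂ)) = U := by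
    apply Submodule.eq_of_le_of_finrank_le
    · rw [Submodule.span_le]
      intro x hx
      rcases hx with rfl | hx
      · exact hAU
      · rw [Set.mem_singleton_iff] at hx; subst hx; exact hBU
    · rw [hU]
      have hr : Set.range ![A, B] = {A, B} := by
        ext x
        simp [Fin.exists_fin_two, or_comm]
      have := finrank_span_eq_card hli
      rw [hr] at this
      rw [this]
      simp
  -- the quadratic
  set a := A 0 c0 * A 1 c1 - A 0 c1 * A 1 c0 with ha_def
  set b := A 0 c0 * B 1 c1 + B 0 c0 * A 1 c1 - A 0 c1 * B 1 c0 - B 0 c1 * A 1 c0 with hb_def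
  set c := B 0 c0 * B 1 c1 - B 0 c1 * B 1 c0 with hc_def
  obtain ⟨z, hz⟩ := IsAlgClosed.exists_pow_nat_eq (discrim a b c) (n := 2) (by norm_num)
  have hz' : discrim a b c = z * z := by rw [← hz]; ring
  refine ⟨Submodule.span ℂ {((-b + z) / (2 * a)) • A + B},
          Submodule.span ℂ {((-b - z) / (2 * a)) • A + B}, ?_⟩
  rintro D ⟨A', hA'U, hA'0, hA'dec, rfl⟩
  obtain ⟨s, t, hst⟩ := Submodule.mem_span_pair.mp (by rw [hspan2]; exact hA'U)
  have hminor : a * s ^ 2 + b * (s * t) + c * t ^ 2 = 0 := by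
    have h0 := dec_minor_zero hA'dec c0 c1
    rw [← hst] at h0
    simp only [Matrix.add_apply, Matrix.smul_apply, smul_eq_mul] at h0
    linear_combination h0
  have ht : t ≠ 0 := by
    intro ht
    subst ht
    have has : a * s ^ 2 = 0 := by linear_combination hminor
    have hs : s = 0 := by
      rcases mul_eq_zero.mp has with h | h
      · exact absurd h hm
      · exact sq_eq_zero_iff.mp h
    apply hA'0
    rw [← hst, hs]
    simp
  set u := s / t with hu_def
  have hquad : a * (u * u) + b * u + c = 0 := by
    have heq : a * (u * u) + b * u + c = (a * s ^ 2 + b * (s * t) + c * t ^ 2) / t ^ 2 := by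
      rw [hu_def]
      field_simp
    rw [heq, hminor, zero_div]
  have hroots := (quadratic_eq_zero_iff hm hz' u).mp hquad
  have hA'eq : A' = t • (u • A + B) := by
    rw [← hst]
    rw [smul_add, smul_smul]
    congr 1
    rw [hu_def]
    field_simp
  have hspanA' : Submodule.span ℂ ({A'} : Set (Matrix (Fin 2) (Fin 3) ℂ))
      = Submodule.span ℂ {u • A + B} := by
    rw [hA'eq]
    exact Submodule.span_singleton_smul_eq (IsUnit.mk0 t ht) _
  rcases hroots with h | h
  · rw [hspanA', h]; exact Set.mem_insert _ _
  · rw [hspanA', h]; exact Set.mem_insert_of_mem _ rfl
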